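/- Let C ⊂ ℝⁿ be a compact convex set containing 0 in its interior, and A a linear map with A(∂C) ⊆ C. Then every point x ∈ ℝⁿ lies in sC for some s > 0, and consequently the sequence (A^k x) is bounded for every x. -/
import Mathlib

open scoped Pointwise

theorem bounded_trajectories_of_inward_pointing
    (n : ℕ) (C : Set (Fin n → ℝ)) (hcomp : IsCompact C) (hconv : Convex ℝ C)
    (h0 : (0 : Fin n → ℝ) ∈ interior C)
    (A : Matrix (Fin n) (Fin n) ℝ)
    (hinward : ∀ x ∈ frontier C, A.mulVec x ∈ C) :
    (∀ x : Fin n → ℝ, ∃ s : ℝ, 0 < s ∧ x ∈ s • C) ∧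
    (∀ x : Fin n → ℝ, ∃ M : ℝ, ∀ k : ℕ, ‖(A ^ k).mulVec x‖ ≤ M) := by
  have hC0 : (0 : Fin n → ℝ) ∈ C := interior_subset h0
  have hnhds : C ∈ nhds (0 : Fin n → ℝ) := mem_interior_iff_mem_nhds.mp h0
  have habs : Absorbent ℝ C := absorbent_nhds_zero hnhds
  have hvnb : Bornology.IsVonNBounded ℝ C :=
    (NormedSpace.isVonNBounded_iff ℝ).mpr hcomp.isBounded
  -- part 1 via gauge
  have part1 : ∀ x : Fin n → ℝ, ∃ s : ℝ, 0 < s ∧ x ∈ s • C := by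
    intro x
    have hpos : (0:ℝ) < gauge C x + 1 := by
      linarith [gauge_nonneg (s := C) (x := x)]
    refine ⟨gauge C x + 1, hpos, ?_⟩
    have h := gauge_lt_one_iff_mem_interior hconv hnhds
      (x := (gauge C x + 1)⁻¹ • x)
    have : gauge C ((gauge C x + 1)⁻¹ • x) < 1 := by
      rw [gauge_smul_of_nonneg (inv_nonneg.mpr hpos.le)]
      rw [smul_eq_mul, inv_mul_lt_iff₀ hpos]
      linarith [gauge_nonneg (s := C) (x := x)]
    have hmem : (gauge C x + 1)⁻¹ • x ∈ C := interior_subset (h.mp this)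
    exact ⟨_, hmem, by simp [smul_smul, mul_inv_cancel₀ hpos.ne']⟩
  refine ⟨part1, ?_⟩
  -- A maps C into C
  have hAC : ∀ y ∈ C, A.mulVec y ∈ C := by
    intro y hy
    rcases eq_or_ne y 0 with rfl | hy0
    · simpa [Matrix.mulVec_zero] using hC0
    · set g := gauge C y with hg
      have hgpos : 0 < g := gauge_pos habs hvnb |>.mpr hy0
      have hg1 : g ≤ 1 := gauge_le_one_of_mem hy
      have hfr : g⁻¹ • y ∈ frontier C := by
        rw [← gauge_eq_one_iff_mem_frontier hconv hnhds,
          gauge_smul_of_nonneg (by positivity), smul_eq_mul, ← hg]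
        field_simp
      have hA := hinward _ hfr
      have : A.mulVec y = g • A.mulVec (g⁻¹ • y) := by
        rw [Matrix.mulVec_smul, smul_smul, mul_inv_cancel₀ hgpos.ne', one_smul]
      rw [this]
      have := hconv (a := g) (b := 1 - g) hA hC0 hgpos.le (by linarith) (by ring)
      simpa using this
  intro x
  obtain ⟨s, hs, hxs⟩ := part1 x
  -- A^k x ∈ s • C for all k
  have hiter : ∀ k : ℕ, (A ^ k).mulVec x ∈ s • C := by
    intro k
    induction k with
    | zero => simpa using hxs
    | succ k ih =>
      obtain ⟨c, hc, hcx⟩ := ih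
      have : (A ^ (k+1)).mulVec x = A.mulVec ((A ^ k).mulVec x) := by
        rw [pow_succ', ← Matrix.mulVec_mulVec]
      rw [this, ← hcx, Matrix.mulVec_smul]
      exact ⟨_, hAC c hc, rfl⟩
  have hbdd : Bornology.IsBounded (s • C) :=
    ((hcomp.image (continuous_const_smul s)).isBounded)
  obtain ⟨M, hM⟩ := isBounded_iff_forall_norm_le.mp hbdd
  exact ⟨M, fun k => hM _ (hiter k)⟩
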